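/- Let f : [0,1] → [0,1] be uniformly continuous with modulus of uniform continuity ω, and let (x_n) be a sequence in [0,1] such that for each n, x_{n+1} lies between x_n and f(x_n). Assume (x_n − x_{n+1}) tends to 0 with rate of convergence β. Then for every ε > 0 and every g : ℕ → ℕ there exists N ≤ Φ(ε,g) such that for all i, j ∈ [N, N+g(N)], |x_i − x_j| ≤ ε, where Φ(ε,g) := u_{2m²} with m := ⌈6/ε⌉, c := 1/(4m), A(p) := 1/max(1, 12m·g(p)), C(p) := min(A(p), ω(A(p))), u_0 := β(c), and u_{n+1} := max(u_n + g(u_n) + 1, β(C(u_n))). -/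

import Mathlib

private lemma crossing_up (x : ℕ → ℝ) {s t : ℕ} (hst : s < t) {p : ℝ}
    (hs : x s ≤ p) (ht : p < x t) :
    ∃ n, s ≤ n ∧ n < t ∧ x n ≤ p ∧ p < x (n+1) ∧ ∀ n', n < n' → n' ≤ t → p < x n' := by
  classical
  set S : Finset ℕ := (Finset.Ico s t).filter (fun n => x n ≤ p) with hS
  have hsS : s ∈ S := by
    rw [hS]
    simp only [Finset.mem_filter, Finset.mem_Ico]
    exact ⟨⟨le_refl s, hst⟩, hs⟩
  have hne : S.Nonempty := ⟨s, hsS⟩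
  have hnS0 : S.max' hne ∈ S := S.max'_mem hne
  have hnS := Finset.mem_Ico.mp (Finset.mem_filter.mp hnS0).1
  have hnxp : x (S.max' hne) ≤ p := (Finset.mem_filter.mp hnS0).2
  set n := S.max' hne with hn
  have hlast : ∀ n', n < n' → n' ≤ t → p < x n' := by
    intro n' h1 h2
    rcases eq_or_lt_of_le h2 with rfl | h2'
    · exact ht
    · by_contra hc
      push_neg at hc
      have hmem : n' ∈ S := by
        rw [hS]
        simp only [Finset.mem_filter, Finset.mem_Ico]
        exact ⟨⟨le_trans hnS.1 h1.le, h2'⟩, hc⟩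
      have := S.le_max' n' hmem
      omega
  exact ⟨n, hnS.1, hnS.2, hnxp, hlast (n+1) (Nat.lt_succ_self n) hnS.2, hlast⟩

private lemma crossing_down (x : ℕ → ℝ) {s t : ℕ} (hst : s < t) {p : ℝ}
    (hs : p ≤ x s) (ht : x t < p) :
    ∃ n, s ≤ n ∧ n < t ∧ p ≤ x n ∧ x (n+1) < p ∧ ∀ n', n < n' → n' ≤ t → x n' < p := by
  obtain ⟨n, h1, h2, h3, h4, h5⟩ := crossing_up (fun k => -x k) hst (p := -p)
    (by simpa) (by simpa)
  refine ⟨n, h1, h2, by simpa using h3, by simpa using h4, fun n' a b => by simpa using h5 n' a b⟩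

private lemma tele (x : ℕ → ℝ) (B : ℝ) (s : ℕ) :
    ∀ e, s ≤ e → (∀ n, s ≤ n → n < e → x (n+1) ≤ x n + B) →
      x e ≤ x s + ((e - s : ℕ) : ℝ) * B := by
  intro e
  induction e with
  | zero =>
    intro hse _
    have : s = 0 := by omega
    subst this
    simp
  | succ e ih =>
    intro hse hstep
    rcases eq_or_lt_of_le hse with rfl | hlt
    · simp
    · have hse' : s ≤ e := by omega
      have h1 := ih hse' (fun n hn1 hn2 => hstep n hn1 (by omega))
      have h2 := hstep e hse' (by omega)
      have hcast : ((e + 1 - s : ℕ) : ℝ) = ((e - s : ℕ) : ℝ) + 1 := by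
        have : e + 1 - s = (e - s) + 1 := by omega
        rw [this]
        push_cast
        ring
      rw [hcast]
      linarith

private lemma climb_count (x : ℕ → ℝ) (c d B E : ℝ) (hB : 0 ≤ B)
    {s t : ℕ} (hst : s < t) (hxs : x s ≤ c) (hxt : d ≤ x t) (hcd : c < d)
    (hstep1 : ∀ n, s ≤ n → n < t → x (n+1) - x n ≤ E)
    (hstep2 : ∀ n, s ≤ n → n < t → c < x n → x n < d → x (n+1) - x n ≤ B) :
    d - c - E ≤ ((t - s : ℕ) : ℝ) * B := by
  classical
  obtain ⟨n₁, hn₁s, hn₁t, hxn₁, hxn₁', hafter⟩ := crossing_up x hst hxs (lt_of_lt_of_le hcd hxt)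
  set T : Finset ℕ := (Finset.Ioc n₁ t).filter (fun n => d ≤ x n) with hT
  have htT : t ∈ T := by
    rw [hT]
    simp only [Finset.mem_filter, Finset.mem_Ioc]
    exact ⟨⟨hn₁t, le_refl t⟩, hxt⟩
  have hTne : T.Nonempty := ⟨t, htT⟩
  set n₂ := T.min' hTne with hn₂def
  have hn₂T := T.min'_mem hTne
  have hn₂mem := Finset.mem_filter.mp hn₂T
  have hn₂1 : n₁ < n₂ := (Finset.mem_Ioc.mp hn₂mem.1).1
  have hn₂2 : n₂ ≤ t := (Finset.mem_Ioc.mp hn₂mem.1).2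
  have hxn₂ : d ≤ x n₂ := hn₂mem.2
  have hband : ∀ n, n₁ + 1 ≤ n → n < n₂ → c < x n ∧ x n < d := by
    intro n h1 h2
    have hnt : n ≤ t := le_trans h2.le hn₂2
    have hgt : c < x n := hafter n (by omega) hnt
    have hnot : n ∉ T := fun hmm => absurd (T.min'_le n hmm) (by omega)
    have hlt : x n < d := by
      by_contra hc
      push_neg at hc
      exact hnot (by rw [hT]; simp only [Finset.mem_filter, Finset.mem_Ioc]; exact ⟨⟨by omega, hnt⟩, hc⟩)
    exact ⟨hgt, hlt⟩
  have htel : x n₂ ≤ x (n₁+1) + ((n₂ - (n₁+1) : ℕ) : ℝ) * B := by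
    apply tele x B (n₁+1) n₂ (by omega)
    intro n hn1 hn2
    obtain ⟨hb1, hb2⟩ := hband n hn1 hn2
    have := hstep2 n (by omega) (by omega) hb1 hb2
    linarith
  have hfirst : x (n₁+1) ≤ c + E := by
    have := hstep1 n₁ hn₁s hn₁t
    linarith
  have hcount : ((n₂ - (n₁+1) : ℕ) : ℝ) ≤ ((t - s : ℕ) : ℝ) := by
    have : (n₂ - (n₁+1)) ≤ (t - s) := by omega
    exact_mod_cast this
  have := mul_le_mul_of_nonneg_right hcount hB
  linarith
set_option maxHeartbeats 2000000 in
private lemma aux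
    (f : ℝ → ℝ)
    (ω : ℝ → ℝ) (hωpos : ∀ δ : ℝ, 0 < δ → 0 < ω δ)
    (hω : ∀ δ : ℝ, 0 < δ → ∀ a ∈ Set.Icc (0:ℝ) 1, ∀ b ∈ Set.Icc (0:ℝ) 1,
      |a - b| < ω δ → |f a - f b| < δ)
    (x : ℕ → ℝ) (hx : ∀ n, x n ∈ Set.Icc (0:ℝ) 1)
    (hbet : ∀ n, min (x n) (f (x n)) ≤ x (n+1) ∧ x (n+1) ≤ max (x n) (f (x n)))
    (β : ℝ → ℕ) (hβ : ∀ δ : ℝ, 0 < δ → ∀ n, β δ ≤ n → |x n - x (n+1)| ≤ δ)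
    (ε : ℝ) (hε : 0 < ε) (g : ℕ → ℕ)
    (m : ℕ) (hm : 6 ≤ m) (hmε : 6 / (m:ℝ) ≤ ε)
    (A : ℕ → ℝ) (hA : ∀ p, A p = 1 / max 1 (12*(m:ℝ)*(g p : ℝ)))
    (C : ℕ → ℝ) (hC : ∀ p, C p = min (A p) (ω (A p)))
    (u : ℕ → ℕ) (huS : ∀ n, u (n+1) = max (u n + g (u n) + 1) (β (C (u n)))) :
    ∃ N, N ≤ u (2*m^2) ∧ ∀ i, N ≤ i → i ≤ N + g N → ∀ j, N ≤ j → j ≤ N + g N →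
      |x i - x j| ≤ ε := by
  classical
  by_contra hcon
  push_neg at hcon
  have hm0 : (0:ℝ) < m := by
    have : (0:ℕ) < m := by omega
    exact_mod_cast this
  have hmne : (m:ℝ) ≠ 0 := ne_of_gt hm0
  have hm6 : (6:ℝ) ≤ m := by exact_mod_cast hm
  set q : ℝ := 1 / (2*(m:ℝ)) with hq
  have hq0 : 0 < q := by rw [hq]; positivity
  have hq1 : (2*(m:ℝ)) * q = 1 := by rw [hq]; field_simp
  have hApos : ∀ p, 0 < A p := by
    intro p
    rw [hA]
    have h1 : (0:ℝ) < max 1 (12*(m:ℝ)*(g p : ℝ)) := lt_of_lt_of_le one_pos (le_max_left _ _)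
    exact one_div_pos.mpr h1
  have hAle : ∀ p, 1 ≤ g p → A p ≤ q / 6 := by
    intro p hgp
    have hgp' : (1:ℝ) ≤ (g p : ℝ) := by exact_mod_cast hgp
    have hX : 12*(m:ℝ) ≤ 12*(m:ℝ)*(g p : ℝ) := by nlinarith
    have hmax : max 1 (12*(m:ℝ)*(g p : ℝ)) = 12*(m:ℝ)*(g p : ℝ) :=
      max_eq_right (by nlinarith)
    rw [hA, hmax]
    have hq6 : q / 6 = 1 / (12*(m:ℝ)) := by rw [hq]; field_simp; ring
    rw [hq6]
    exact one_div_le_one_div_of_le (by nlinarith) hX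
  have hCpos : ∀ p, 0 < C p := by
    intro p; rw [hC]
    exact lt_min (hApos p) (hωpos _ (hApos p))
  have hCA : ∀ p, C p ≤ A p := fun p => by rw [hC]; exact min_le_left _ _
  have hCω : ∀ p, C p ≤ ω (A p) := fun p => by rw [hC]; exact min_le_right _ _
  have humono : Monotone u := monotone_nat_of_le_succ (fun n => by
    rw [huS n]; exact le_trans (by omega) (le_max_left _ _))
  have hwin : ∀ n, u n + g (u n) < u (n+1) := fun n => by
    rw [huS n]; exact lt_of_lt_of_le (by omega) (le_max_left _ _)
  have hstep : ∀ k n, u (k+1) ≤ n → |x n - x (n+1)| ≤ C (u k) := by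
    intro k n hn
    refine hβ _ (hCpos _) n (le_trans ?_ hn)
    rw [huS k]; exact le_max_right _ _
  have hstepf : ∀ n, |x (n+1) - x n| ≤ |f (x n) - x n| := by
    intro n
    obtain ⟨h1, h2⟩ := hbet n
    have hl := neg_abs_le (f (x n) - x n)
    have hr := le_abs_self (f (x n) - x n)
    rcases le_total (x n) (f (x n)) with hc | hc
    · rw [min_eq_left hc] at h1; rw [max_eq_right hc] at h2
      rw [abs_le]; constructor <;> linarith
    · rw [min_eq_right hc] at h1; rw [max_eq_left hc] at h2
      rw [abs_le]; constructor <;> linarith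
  have htrans : ∀ δ : ℝ, 0 < δ → ∀ y ∈ Set.Icc (0:ℝ) 1, ∀ p ∈ Set.Icc (0:ℝ) 1,
      |y - p| ≤ ω δ → |f y - f p| ≤ 2*δ := by
    intro δ hδ y hy p hp hyp
    have hωδ := hωpos δ hδ
    have habs := abs_nonneg (y - p)
    have hy' := Set.mem_Icc.mp hy
    have hp' := Set.mem_Icc.mp hp
    have hz01 : (y + p)/2 ∈ Set.Icc (0:ℝ) 1 :=
      Set.mem_Icc.mpr ⟨by linarith [hy'.1, hp'.1], by linarith [hy'.2, hp'.2]⟩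
    have e1 : y - (y + p)/2 = (y - p)/2 := by ring
    have e2 : (y + p)/2 - p = (y - p)/2 := by ring
    have hhalf : |(y-p)/2| < ω δ := by
      rw [abs_div, abs_of_pos (by norm_num : (0:ℝ) < 2)]
      linarith
    have hyz := hω δ hδ y hy ((y + p)/2) hz01 (by rw [e1]; exact hhalf)
    have hzp := hω δ hδ ((y + p)/2) hz01 p hp (by rw [e2]; exact hhalf)
    calc |f y - f p| ≤ |f y - f ((y + p)/2)| + |f ((y + p)/2) - f p| := abs_sub_le _ _ _
      _ ≤ 2*δ := by linarith
  have hbad : ∀ k, k ≤ 2*m^2 → ∃ i, u k ≤ i ∧ i ≤ u k + g (u k) ∧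
      ∃ j, u k ≤ j ∧ j ≤ u k + g (u k) ∧ ε < |x i - x j| :=
    fun k hk => hcon (u k) (humono hk)
  have hg1 : ∀ k, k ≤ 2*m^2 → 1 ≤ g (u k) := by
    intro k hk
    by_contra hg
    have hg0 : g (u k) = 0 := by omega
    obtain ⟨i, hi1, hi2, j, hj1, hj2, hij⟩ := hbad k hk
    rw [hg0] at hi2 hj2
    have hieq : i = j := by omega
    rw [hieq] at hij
    simp at hij
    linarith
  have hcover : ∀ k, k ≤ 2*m^2 → ∃ r : ℕ, r < 2*m ∧
      (∃ s, u k ≤ s ∧ s ≤ u k + g (u k) ∧ x s ≤ (r:ℝ)*q) ∧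
      (∃ t, u k ≤ t ∧ t ≤ u k + g (u k) ∧ (r:ℝ)*q + 6*q ≤ x t) := by
    intro k hk
    have key : ∀ i j, u k ≤ i → i ≤ u k + g (u k) → u k ≤ j → j ≤ u k + g (u k) →
        ε < x j - x i → ∃ r : ℕ, r < 2*m ∧
        (∃ s, u k ≤ s ∧ s ≤ u k + g (u k) ∧ x s ≤ (r:ℝ)*q) ∧
        (∃ t, u k ≤ t ∧ t ≤ u k + g (u k) ∧ (r:ℝ)*q + 6*q ≤ x t) := by
      intro i j hi1 hi2 hj1 hj2 hij
      have h0xi : 0 ≤ x i := (hx i).1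
      have hxj1 : x j ≤ 1 := (hx j).2
      have hr1 : x i ≤ (⌈x i / q⌉₊:ℝ)*q := (div_le_iff₀ hq0).mp (Nat.le_ceil (x i / q))
      have hr2 : (⌈x i / q⌉₊:ℝ)*q < x i + q := by
        have h1 : ((⌈x i / q⌉₊ : ℕ):ℝ) < x i / q + 1 := Nat.ceil_lt_add_one (by positivity)
        have h2 : ((⌈x i / q⌉₊ : ℕ):ℝ) * q < (x i / q + 1) * q :=
          mul_lt_mul_of_pos_right h1 hq0
        have h3 : (x i / q + 1) * q = x i + q := by field_simp
        linarith
      have h12q : 12*q ≤ ε := by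
        have he : 12*q = 6/(m:ℝ) := by rw [hq]; field_simp; ring
        linarith
      have hhigh : (⌈x i / q⌉₊:ℝ)*q + 6*q ≤ x j := by linarith
      have hrlt : ⌈x i / q⌉₊ < 2*m := by
        have h1 : ((⌈x i / q⌉₊:ℝ)+6)*q ≤ (2*(m:ℝ))*q := by
          have e : ((⌈x i / q⌉₊:ℝ)+6)*q = (⌈x i / q⌉₊:ℝ)*q + 6*q := by ring
          rw [e, hq1]
          linarith
        have h2 : (⌈x i / q⌉₊:ℝ)+6 ≤ 2*(m:ℝ) := le_of_mul_le_mul_right h1 hq0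
        have h3 : ((⌈x i / q⌉₊:ℕ):ℝ) < ((2*m : ℕ):ℝ) := by push_cast; linarith
        exact_mod_cast h3
      exact ⟨⌈x i / q⌉₊, hrlt, ⟨i, hi1, hi2, hr1⟩, ⟨j, hj1, hj2, hhigh⟩⟩
    obtain ⟨i, hi1, hi2, j, hj1, hj2, hij⟩ := hbad k hk
    rcases le_total (x i) (x j) with hle | hle
    · refine key i j hi1 hi2 hj1 hj2 ?_
      rwa [abs_sub_comm, abs_of_nonneg (by linarith)] at hij
    · refine key j i hj1 hj2 hi1 hi2 ?_
      rwa [abs_of_nonneg (by linarith)] at hij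
  -- pigeonhole: choose grid index per window
  have hcover' : ∀ k : ℕ, ∃ r : ℕ, k ≤ 2*m^2 → (r < 2*m ∧
      (∃ s, u k ≤ s ∧ s ≤ u k + g (u k) ∧ x s ≤ (r:ℝ)*q) ∧
      (∃ t, u k ≤ t ∧ t ≤ u k + g (u k) ∧ (r:ℝ)*q + 6*q ≤ x t)) := by
    intro k
    by_cases hk : k ≤ 2*m^2
    · obtain ⟨r, h⟩ := hcover k hk
      exact ⟨r, fun _ => h⟩
    · exact ⟨0, fun hk' => absurd hk' hk⟩
  choose rfun hrspec using hcover'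
  have hmaps : ∀ k ∈ Finset.Icc 1 (2*m^2), rfun k ∈ Finset.range (2*m) := by
    intro k hk
    rw [Finset.mem_Icc] at hk
    exact Finset.mem_range.mpr (hrspec k hk.2).1
  have hcard : (Finset.range (2*m)).card * 2 < (Finset.Icc 1 (2*m^2)).card := by
    rw [Finset.card_range, Nat.card_Icc]
    have hmm : 6*m ≤ m*m := Nat.mul_le_mul_right m hm
    have hsq : m^2 = m*m := sq m
    omega
  obtain ⟨y, hy, hyc⟩ := Finset.exists_lt_card_fiber_of_mul_lt_card_of_maps_to hmaps hcard
  set S := (Finset.Icc 1 (2*m^2)).filter (fun k => rfun k = y) with hS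
  have hSne : S.Nonempty := Finset.card_pos.mp (by omega)
  have h1S : 1 < S.card := by omega
  have hk13 : S.min' hSne < S.max' hSne := S.min'_lt_max'_of_card h1S
  set k₁ := S.min' hSne with hk1def
  set k₃ := S.max' hSne with hk3def
  have hk₁S : k₁ ∈ S := S.min'_mem hSne
  have hk₃S : k₃ ∈ S := S.max'_mem hSne
  have hk₁e : k₁ ∈ S.erase k₃ := Finset.mem_erase.mpr ⟨Nat.ne_of_lt hk13, hk₁S⟩
  have hcard' : 0 < ((S.erase k₃).erase k₁).card := by
    rw [Finset.card_erase_of_mem hk₁e, Finset.card_erase_of_mem hk₃S]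
    omega
  obtain ⟨k₂, hk₂S'⟩ := Finset.card_pos.mp hcard'
  have hk₂ne1 : k₂ ≠ k₁ := (Finset.mem_erase.mp hk₂S').1
  have hk₂mem := (Finset.mem_erase.mp hk₂S').2
  have hk₂ne3 : k₂ ≠ k₃ := (Finset.mem_erase.mp hk₂mem).1
  have hk₂S : k₂ ∈ S := (Finset.mem_erase.mp hk₂mem).2
  have hk12 : k₁ < k₂ := lt_of_le_of_ne (S.min'_le k₂ hk₂S) (Ne.symm hk₂ne1)
  have hk23 : k₂ < k₃ := lt_of_le_of_ne (S.le_max' k₂ hk₂S) hk₂ne3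
  have hmemS : ∀ k, k ∈ S → 1 ≤ k ∧ k ≤ 2*m^2 ∧ rfun k = y := by
    intro k hkS
    rw [hS] at hkS
    have h1 := Finset.mem_filter.mp hkS
    have h2 := Finset.mem_Icc.mp h1.1
    exact ⟨h2.1, h2.2, h1.2⟩
  obtain ⟨hk₁1, hk₁2, hk₁r⟩ := hmemS k₁ hk₁S
  obtain ⟨_, hk₂2, hk₂r⟩ := hmemS k₂ hk₂S
  obtain ⟨_, hk₃2, hk₃r⟩ := hmemS k₃ hk₃S
  have hw1 := hrspec k₁ hk₁2
  have hw2 := hrspec k₂ hk₂2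
  have hw3 := hrspec k₃ hk₃2
  rw [hk₁r] at hw1
  rw [hk₂r] at hw2
  rw [hk₃r] at hw3
  obtain ⟨hylt, ⟨s₁, hs₁a, hs₁b, hs₁x⟩, ⟨t₁, ht₁a, ht₁b, ht₁x⟩⟩ := hw1
  obtain ⟨_, ⟨s₂, hs₂a, hs₂b, hs₂x⟩, ⟨t₂, ht₂a, ht₂b, ht₂x⟩⟩ := hw2
  obtain ⟨_, ⟨s₃, hs₃a, hs₃b, hs₃x⟩, ⟨t₃, ht₃a, ht₃b, ht₃x⟩⟩ := hw3
  set a : ℝ := (y:ℝ)*q with ha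
  have ha0 : (0:ℝ) ≤ a := by rw [ha]; positivity
  have hA₁pos : 0 < A (u k₁) := hApos (u k₁)
  -- the displacement bound for f on (a, a+6q)
  have hfid : ∀ p, a < p → p < a + 6*q → |f p - p| ≤ 2 * A (u k₁) := by
    intro p hp1 hp2
    have hp0 : 0 ≤ p := le_trans ha0 hp1.le
    have hpt3 : p ≤ 1 := by linarith [(hx t₃).2, ht₃x]
    have hpIcc : p ∈ Set.Icc (0:ℝ) 1 := Set.mem_Icc.mpr ⟨hp0, hpt3⟩
    have hk1k2 : u (k₁+1) ≤ u k₂ := humono (by omega)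
    have hk2k3 : u (k₂+1) ≤ u k₃ := humono (by omega)
    have hwin2 := hwin k₂
    have hlow : p - 2 * A (u k₁) ≤ f p := by
      have hst : s₂ < t₃ := by omega
      obtain ⟨n, hn1, hn2, hxn, hxn', _⟩ :=
        crossing_up x hst (le_trans hs₂x hp1.le) (lt_of_lt_of_le hp2 ht₃x)
      have hnstep : |x n - x (n+1)| ≤ C (u k₁) := hstep k₁ n (by omega)
      have habs2 : x (n+1) - x n ≤ C (u k₁) := by
        rw [abs_sub_comm] at hnstep
        linarith [le_abs_self (x (n+1) - x n)]
      have hfxn : x (n+1) ≤ f (x n) := by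
        rcases le_total (f (x n)) (x n) with hc | hc
        · have h2 := (hbet n).2; rw [max_eq_left hc] at h2; linarith
        · have h2 := (hbet n).2; rwa [max_eq_right hc] at h2
      have hdist : |x n - p| ≤ ω (A (u k₁)) := by
        have h1 : |x n - p| = p - x n := by
          rw [abs_sub_comm]; exact abs_of_nonneg (by linarith)
        rw [h1]
        linarith [hCω (u k₁)]
      have htr := htrans (A (u k₁)) hA₁pos (x n) (hx n) p hpIcc hdist
      have h2 : f (x n) - f p ≤ |f (x n) - f p| := le_abs_self _
      linarith
    have hhigh : f p ≤ p + 2 * A (u k₁) := by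
      have hst : t₂ < s₃ := by omega
      obtain ⟨n, hn1, hn2, hxn, hxn', _⟩ :=
        crossing_down x hst (le_trans hp2.le ht₂x) (lt_of_le_of_lt hs₃x hp1)
      have hnstep : |x n - x (n+1)| ≤ C (u k₁) := hstep k₁ n (by omega)
      have habs2 : x n - x (n+1) ≤ C (u k₁) := by
        linarith [le_abs_self (x n - x (n+1))]
      have hfxn : f (x n) ≤ x (n+1) := by
        rcases le_total (f (x n)) (x n) with hc | hc
        · have h2 := (hbet n).1; rwa [min_eq_right hc] at h2
        · have h2 := (hbet n).1; rw [min_eq_left hc] at h2; linarith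
      have hdist : |x n - p| ≤ ω (A (u k₁)) := by
        have h1 : |x n - p| = x n - p := abs_of_nonneg (by linarith)
        rw [h1]
        linarith [hCω (u k₁)]
      have htr := htrans (A (u k₁)) hA₁pos (x n) (hx n) p hpIcc hdist
      have h2 : f p - f (x n) ≤ |f (x n) - f p| := by
        rw [abs_sub_comm]; exact le_abs_self _
      linarith
    rw [abs_le]
    constructor <;> linarith
  -- blocking: the first window cannot traverse the middle band
  have hg₁ : 1 ≤ g (u k₁) := hg1 k₁ hk₁2
  have hg₁' : (1:ℝ) ≤ (g (u k₁) : ℝ) := by exact_mod_cast hg₁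
  have hg₁ne : (g (u k₁) : ℝ) ≠ 0 := by positivity
  have hA₁eq : A (u k₁) = 1/(12*(m:ℝ)*(g (u k₁) : ℝ)) := by
    rw [hA]
    congr 1
    exact max_eq_right (by nlinarith)
  have hcoarse : ∀ n, u k₁ ≤ n → |x n - x (n+1)| ≤ q/6 := by
    intro n hn
    have hk₁pred : k₁ - 1 + 1 = k₁ := by omega
    have h1 : u (k₁ - 1 + 1) ≤ n := by rw [hk₁pred]; exact hn
    have h2 := hstep (k₁-1) n h1
    have h3 : A (u (k₁-1)) ≤ q/6 := hAle _ (hg1 _ (by omega))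
    linarith [hCA (u (k₁-1))]
  have hbandstep : ∀ n, a < x n → x n < a + 6*q → |x (n+1) - x n| ≤ 2 * A (u k₁) :=
    fun n h1 h2 => le_trans (hstepf n) (hfid (x n) h1 h2)
  have hts : s₁ ≠ t₁ := by
    intro hcontra
    rw [hcontra] at hs₁x
    linarith
  have hcount : (5:ℝ)/6 * q ≤ (g (u k₁) : ℝ) * (2 * A (u k₁)) := by
    rcases Nat.lt_trichotomy s₁ t₁ with hlt | heq | hgt
    · have hcc := climb_count x (a+q) (a+2*q) (2*A (u k₁)) (q/6) (by positivity) hlt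
        (by linarith) (by linarith) (by linarith)
        (fun n hn1 hn2 => by
          have hco := hcoarse n (le_trans hs₁a hn1)
          have h' : x (n+1) - x n ≤ |x n - x (n+1)| := by
            rw [abs_sub_comm]; exact le_abs_self _
          linarith)
        (fun n hn1 hn2 hb1 hb2 => by
          have hbs := hbandstep n (by linarith) (by linarith)
          linarith [le_abs_self (x (n+1) - x n)])
      have hc2 : ((t₁ - s₁ : ℕ):ℝ) ≤ (g (u k₁):ℝ) := by
        have : t₁ - s₁ ≤ g (u k₁) := by omega
        exact_mod_cast this
      have hmul := mul_le_mul_of_nonneg_right hc2 (by positivity : (0:ℝ) ≤ 2 * A (u k₁))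
      linarith
    · exact absurd heq hts
    · have hcc := climb_count (fun n => -x n) (-(a+5*q)) (-(a+4*q)) (2*A (u k₁)) (q/6)
        (by positivity) hgt
        (by linarith) (by linarith) (by linarith)
        (fun n hn1 hn2 => by
          have hco := hcoarse n (le_trans ht₁a hn1)
          linarith [le_abs_self (x n - x (n+1))])
        (fun n hn1 hn2 hb1 hb2 => by
          have hbs := hbandstep n (by linarith) (by linarith)
          linarith [neg_abs_le (x (n+1) - x n)])
      have hc2 : ((s₁ - t₁ : ℕ):ℝ) ≤ (g (u k₁):ℝ) := by
        have : s₁ - t₁ ≤ g (u k₁) := by omega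
        exact_mod_cast this
      have hmul := mul_le_mul_of_nonneg_right hc2 (by positivity : (0:ℝ) ≤ 2 * A (u k₁))
      linarith
  have hfin : (g (u k₁):ℝ) * (2 * A (u k₁)) = q/3 := by
    rw [hA₁eq, hq]
    field_simp
    ring
  rw [hfin] at hcount
  linarith

theorem metastability_KM_continuous
    (f : ℝ → ℝ) (hf : ∀ a ∈ Set.Icc (0:ℝ) 1, f a ∈ Set.Icc (0:ℝ) 1)
    (ω : ℝ → ℝ) (hωpos : ∀ δ : ℝ, 0 < δ → 0 < ω δ)
    (hω : ∀ δ : ℝ, 0 < δ → ∀ a ∈ Set.Icc (0:ℝ) 1, ∀ b ∈ Set.Icc (0:ℝ) 1,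
      |a - b| < ω δ → |f a - f b| < δ)
    (x : ℕ → ℝ) (hx : ∀ n, x n ∈ Set.Icc (0:ℝ) 1)
    (hbet : ∀ n, min (x n) (f (x n)) ≤ x (n+1) ∧ x (n+1) ≤ max (x n) (f (x n)))
    (β : ℝ → ℕ) (hβ : ∀ δ : ℝ, 0 < δ → ∀ n, β δ ≤ n → |x n - x (n+1)| ≤ δ)
    (ε : ℝ) (hε : 0 < ε) (g : ℕ → ℕ) :
    ∃ N, (N ≤
      (let m : ℕ := ⌈6/ε⌉₊
       let c : ℝ := 1/(4*(m:ℝ))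
       let A : ℕ → ℝ := fun p => 1 / max 1 (12*(m:ℝ)*(g p : ℝ))
       let C : ℕ → ℝ := fun p => min (A p) (ω (A p))
       let u : ℕ → ℕ := fun n => Nat.rec (β c) (fun _ un => max (un + g un + 1) (β (C un))) n
       u (2*m^2))) ∧
      ∀ i, N ≤ i → i ≤ N + g N → ∀ j, N ≤ j → j ≤ N + g N → |x i - x j| ≤ ε := by
  rcases le_or_gt 1 ε with h1 | h1
  · refine ⟨0, Nat.zero_le _, ?_⟩
    intro i _ _ j _ _
    have hxi := Set.mem_Icc.mp (hx i)
    have hxj := Set.mem_Icc.mp (hx j)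
    rw [abs_le]
    constructor <;> linarith [hxi.1, hxi.2, hxj.1, hxj.2]
  · have hm : 6 ≤ ⌈6/ε⌉₊ := by
      have h5 : (5:ℝ) < 6/ε := by
        rw [lt_div_iff₀ hε]; nlinarith
      have := Nat.lt_ceil.mpr (show ((5:ℕ):ℝ) < 6/ε by push_cast; exact h5)
      omega
    have hm0 : (0:ℝ) < (⌈6/ε⌉₊:ℝ) := by
      have : 0 < ⌈6/ε⌉₊ := by omega
      exact_mod_cast this
    have hmε : 6 / ((⌈6/ε⌉₊:ℕ):ℝ) ≤ ε := by
      rw [div_le_iff₀ hm0]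
      have h2 := Nat.le_ceil (6/ε)
      rw [div_le_iff₀ hε] at h2
      linarith
    exact aux f ω hωpos hω x hx hbet β hβ ε hε g ⌈6/ε⌉₊ hm hmε
      (fun p => 1 / max 1 (12*((⌈6/ε⌉₊:ℕ):ℝ)*(g p : ℝ))) (fun p => rfl)
      (fun p => min (1 / max 1 (12*((⌈6/ε⌉₊:ℕ):ℝ)*(g p : ℝ)))
        (ω (1 / max 1 (12*((⌈6/ε⌉₊:ℕ):ℝ)*(g p : ℝ))))) (fun p => rfl)
      (fun n => Nat.rec (β (1/(4*((⌈6/ε⌉₊:ℕ):ℝ))))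
        (fun _ un => max (un + g un + 1)
          (β (min (1 / max 1 (12*((⌈6/ε⌉₊:ℕ):ℝ)*(g un : ℝ)))
            (ω (1 / max 1 (12*((⌈6/ε⌉₊:ℕ):ℝ)*(g un : ℝ))))))) n)
      (fun n => rfl)
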